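/- Let (R, α) be a multiplicative Hom-Lie conformal algebra with α surjective and Z(R) = 0. Then QC(R) is closed under the conformal commutator (i.e., forms a Hom-Lie conformal algebra) if and only if [QC(R)_λ QC(R)] = 0. -/

import Mathlib

open Polynomial

/-- A Hom-Lie conformal algebra.  The carrier `R` is a `ℂ[∂]`-module (here the
action of `∂` is the action of `Polynomial.X`), `alpha` is a `ℂ[∂]`-linear map
(so it is `ℂ`-linear and commutes with `∂`), and the λ-bracket is modelled as a
family of `ℂ`-bilinear maps indexed by `λ ∈ ℂ[∂]` (so that substitutions such as
`λ ↦ -∂-λ` make sense). -/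
structure HLCA (R : Type*) [AddCommGroup R] [Module (Polynomial ℂ) R] where
  alpha : R →ₗ[Polynomial ℂ] R
  br : Polynomial ℂ → R → R → R
  br_add_left : ∀ l a a' b, br l (a + a') b = br l a b + br l a' b
  br_add_right : ∀ l a b b', br l a (b + b') = br l a b + br l a b'
  br_smul_left : ∀ l (c : ℂ) a b, br l ((C c) • a) b = (C c) • br l a b
  br_smul_right : ∀ l (c : ℂ) a b, br l a ((C c) • b) = (C c) • br l a b
  sesq_left : ∀ l a b, br l ((X : Polynomial ℂ) • a) b = (-l) • br l a b
  sesq_right : ∀ l a b,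
    br l a ((X : Polynomial ℂ) • b) = ((X : Polynomial ℂ) + l) • br l a b
  skew : ∀ l a b, br l a b = - br (-(X : Polynomial ℂ) - l) b a
  jacobi : ∀ l m a b c,
    br l (alpha a) (br m b c)
      = br (l + m) (br l a b) (alpha c) + br m (alpha b) (br l a c)

/-- A Hom-Lie conformal algebra is multiplicative if `α` is a homomorphism for
the λ-bracket. -/
def HLCA.Multiplicative {R : Type*} [AddCommGroup R] [Module (Polynomial ℂ) R]
    (L : HLCA R) : Prop :=
  ∀ l a b, L.alpha (L.br l a b) = L.br l (L.alpha a) (L.alpha b)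

/-- A conformal linear map `D : R → R[λ]`, modelled as a family `D_λ` indexed by
`λ ∈ ℂ[∂]`: `ℂ`-linear with `D_λ(∂a) = (∂+λ) D_λ(a)`. -/
structure IsConfLin {R : Type*} [AddCommGroup R] [Module (Polynomial ℂ) R]
    (D : Polynomial ℂ → R → R) : Prop where
  map_add : ∀ l a b, D l (a + b) = D l a + D l b
  map_smul : ∀ l (c : ℂ) a, D l ((C c) • a) = (C c) • D l a
  conf : ∀ l a, D l ((X : Polynomial ℂ) • a) = ((X : Polynomial ℂ) + l) • D l a

/-- Membership in `Ω = {D ∈ Cend(R) | D_λ ∘ α = α ∘ D_λ}`. -/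
def InOmega {R : Type*} [AddCommGroup R] [Module (Polynomial ℂ) R]
    (L : HLCA R) (D : Polynomial ℂ → R → R) : Prop :=
  IsConfLin D ∧ ∀ l a, D l (L.alpha a) = L.alpha (D l a)

/-- `D` is an `α^k`-derivation of `(R, α)`. -/
def IsDer {R : Type*} [AddCommGroup R] [Module (Polynomial ℂ) R]
    (L : HLCA R) (k : ℕ) (D : Polynomial ℂ → R → R) : Prop :=
  InOmega L D ∧
    ∀ l m a b,
      D l (L.br m a b)
        = L.br (l + m) (D l a) ((⇑L.alpha)^[k] b)
          + L.br m ((⇑L.alpha)^[k] a) (D l b)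

/-- The conformal commutator `[D_λ H]_μ(a) = D_λ(H_{μ−λ}(a)) − H_{μ−λ}(D_λ(a))`. -/
noncomputable def cComm {R : Type*} [AddCommGroup R] [Module (Polynomial ℂ) R]
    (D H : Polynomial ℂ → R → R) (l m : Polynomial ℂ) (a : R) : R :=
  D l (H (m - l) a) - H (m - l) (D l a)

/-- `D` is a generalized `α^k`-derivation: there are `D', D'' ∈ Ω` with
`[(D_μ a)_{λ+μ} α^k(b)] + [α^k(a)_λ (D'_μ b)] = D''_μ([a_λ b])`. -/
def IsGDer {R : Type*} [AddCommGroup R] [Module (Polynomial ℂ) R]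
    (L : HLCA R) (k : ℕ) (D : Polynomial ℂ → R → R) : Prop :=
  InOmega L D ∧
    ∃ D' D'', InOmega L D' ∧ InOmega L D'' ∧
      ∀ l m a b,
        L.br (l + m) (D m a) ((⇑L.alpha)^[k] b)
            + L.br l ((⇑L.alpha)^[k] a) (D' m b)
          = D'' m (L.br l a b)

/-- `D` is an `α^k`-quasiderivation: there is `D' ∈ Ω` with
`[(D_μ a)_{λ+μ} α^k(b)] + [α^k(a)_λ (D_μ b)] = D'_μ([a_λ b])`. -/
def IsQDer {R : Type*} [AddCommGroup R] [Module (Polynomial ℂ) R]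
    (L : HLCA R) (k : ℕ) (D : Polynomial ℂ → R → R) : Prop :=
  InOmega L D ∧
    ∃ D', InOmega L D' ∧
      ∀ l m a b,
        L.br (l + m) (D m a) ((⇑L.alpha)^[k] b)
            + L.br l ((⇑L.alpha)^[k] a) (D m b)
          = D' m (L.br l a b)

/-- `D` is an `α^k`-centroid element:
`[(D_μ a)_{λ+μ} α^k(b)] = [α^k(a)_λ (D_μ b)] = D_μ([a_λ b])`. -/
def IsCentroid {R : Type*} [AddCommGroup R] [Module (Polynomial ℂ) R]
    (L : HLCA R) (k : ℕ) (D : Polynomial ℂ → R → R) : Prop :=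
  InOmega L D ∧
    ∀ l m a b,
      L.br (l + m) (D m a) ((⇑L.alpha)^[k] b)
          = L.br l ((⇑L.alpha)^[k] a) (D m b) ∧
        L.br (l + m) (D m a) ((⇑L.alpha)^[k] b) = D m (L.br l a b)

/-- `D` is an `α^k`-quasicentroid element:
`[(D_μ a)_{λ+μ} α^k(b)] = [α^k(a)_λ (D_μ b)]`. -/
def IsQC {R : Type*} [AddCommGroup R] [Module (Polynomial ℂ) R]
    (L : HLCA R) (k : ℕ) (D : Polynomial ℂ → R → R) : Prop :=
  InOmega L D ∧
    ∀ l m a b,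
      L.br (l + m) (D m a) ((⇑L.alpha)^[k] b)
        = L.br l ((⇑L.alpha)^[k] a) (D m b)

/-- `D` is an `α^k`-central derivation:
`[(D_μ a)_{λ+μ} α^k(b)] = D_μ([a_λ b]) = 0`. -/
def IsZDer {R : Type*} [AddCommGroup R] [Module (Polynomial ℂ) R]
    (L : HLCA R) (k : ℕ) (D : Polynomial ℂ → R → R) : Prop :=
  InOmega L D ∧
    ∀ l m a b,
      L.br (l + m) (D m a) ((⇑L.alpha)^[k] b) = 0 ∧ D m (L.br l a b) = 0

lemma br_zero_left {R : Type*} [AddCommGroup R] [Module (Polynomial ℂ) R]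
    (L : HLCA R) (l : Polynomial ℂ) (b : R) : L.br l 0 b = 0 := by
  have h := L.br_add_left l 0 0 b
  rw [add_zero] at h
  exact right_eq_add.mp h

lemma br_zero_right {R : Type*} [AddCommGroup R] [Module (Polynomial ℂ) R]
    (L : HLCA R) (l : Polynomial ℂ) (a : R) : L.br l a 0 = 0 := by
  have h := L.br_add_right l a 0 0
  rw [add_zero] at h
  exact right_eq_add.mp h

lemma iter_comm {R : Type*} [AddCommGroup R] [Module (Polynomial ℂ) R]
    {L : HLCA R} {D : Polynomial ℂ → R → R} (hD : InOmega L D)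
    (k : ℕ) (l : Polynomial ℂ) (a : R) :
    (⇑L.alpha)^[k] (D l a) = D l ((⇑L.alpha)^[k] a) := by
  induction k with
  | zero => simp
  | succ n ih =>
      rw [Function.iterate_succ_apply', Function.iterate_succ_apply', ih,
        hD.2 l]

/-- Key computation: for `D ∈ QC_k`, `H ∈ QC_s`,
`[(D_ν H_{m-ν} a)_{l+m} α^{k+s} b] = [a_{l} ...]`. -/
lemma qc_comp {R : Type*} [AddCommGroup R] [Module (Polynomial ℂ) R]
    {L : HLCA R} {k s : ℕ} {D H : Polynomial ℂ → R → R}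
    (hD : IsQC L k D) (hH : IsQC L s H)
    (l m ν : Polynomial ℂ) (a b : R) :
    L.br (l + m) (D ν (H (m - ν) a)) ((⇑L.alpha)^[k + s] b)
      = L.br l ((⇑L.alpha)^[k + s] a) (H (m - ν) (D ν b)) := by
  have e1 : (⇑L.alpha)^[k + s] b = (⇑L.alpha)^[k] ((⇑L.alpha)^[s] b) :=
    Function.iterate_add_apply _ k s b
  have e2 : (⇑L.alpha)^[k + s] a = (⇑L.alpha)^[s] ((⇑L.alpha)^[k] a) := by
    rw [add_comm]; exact Function.iterate_add_apply _ s k a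
  rw [e1, e2]
  have h1 := hD.2 (l + m - ν) ν (H (m - ν) a) ((⇑L.alpha)^[s] b)
  rw [show l + m - ν + ν = l + m by ring] at h1
  rw [h1, iter_comm hH.1, ← iter_comm hD.1]
  have h2 := hH.2 l (m - ν) ((⇑L.alpha)^[k] a) (D ν b)
  rw [show l + (m - ν) = l + m - ν by ring] at h2
  exact h2

lemma br_sub_left {R : Type*} [AddCommGroup R] [Module (Polynomial ℂ) R]
    (L : HLCA R) (l : Polynomial ℂ) (a a' b : R) :
    L.br l (a - a') b = L.br l a b - L.br l a' b := by
  have h := L.br_add_left l a' (a - a') b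
  rw [add_sub_cancel] at h
  rw [h]; abel

lemma br_sub_right {R : Type*} [AddCommGroup R] [Module (Polynomial ℂ) R]
    (L : HLCA R) (l : Polynomial ℂ) (a b b' : R) :
    L.br l a (b - b') = L.br l a b - L.br l a b' := by
  have h := L.br_add_right l a b' (b - b')
  rw [add_sub_cancel] at h
  rw [h]; abel

lemma half_zero {R : Type*} [AddCommGroup R] [Module (Polynomial ℂ) R]
    {u : R} (h : u = -u) : u = 0 := by
  have h' : u + u = 0 := eq_neg_iff_add_eq_zero.mp h
  have h2 : (2 : Polynomial ℂ) • u = 0 := by rw [two_smul]; exact h'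
  calc u = (1 : Polynomial ℂ) • u := (one_smul _ _).symm
    _ = ((C (2⁻¹ : ℂ)) * 2) • u := by
        rw [show ((C (2⁻¹ : ℂ)) * 2 : Polynomial ℂ) = 1 by
          rw [← map_ofNat C 2, ← C_mul]; norm_num]
    _ = (C (2⁻¹ : ℂ)) • ((2 : Polynomial ℂ) • u) := by rw [mul_smul]
    _ = 0 := by rw [h2, smul_zero]

/-- Let `(R, α)` be a multiplicative Hom-Lie conformal algebra
with `α` surjective and trivial center.  Then `QC(R)` is closed under the
conformal commutator (i.e. forms a Hom-Lie conformal algebra) if and only if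
`[QC(R)_λ QC(R)] = 0`. -/
theorem stmt17 {R : Type*} [AddCommGroup R] [Module (Polynomial ℂ) R]
    (L : HLCA R) (hL : L.Multiplicative)
    (hsurj : Function.Surjective L.alpha)
    (hZ : ∀ c : R, (∀ l a, L.br l c a = 0) → c = 0) :
    (∀ (k s : ℕ) (D H : Polynomial ℂ → R → R),
        IsQC L k D → IsQC L s H → ∀ l, IsQC L (k + s) (cComm D H l))
      ↔
    (∀ (k s : ℕ) (D H : Polynomial ℂ → R → R),
        IsQC L k D → IsQC L s H → ∀ l m a, cComm D H l m a = 0) := by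
  constructor
  · -- closure implies triviality
    intro h k s D H hD hH l m a
    have hc := h k s D H hD hH l
    set c := cComm D H l m a with hcdef
    have key : ∀ (l' : Polynomial ℂ) (x : R), L.br l' x c = 0 := by
      intro l' x
      obtain ⟨a', ha'⟩ := (hsurj.iterate (k + s)) x
      rw [← ha']
      have A := qc_comp hD hH l' m l a' a
      have B := qc_comp hH hD l' m (m - l) a' a
      rw [show m - (m - l) = l by ring] at B
      rw [show s + k = k + s from add_comm s k] at B
      have hQ := hc.2 l' m a' a
      have hL' : L.br (l' + m) (cComm D H l m a') ((⇑L.alpha)^[k + s] a)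
          = - L.br l' ((⇑L.alpha)^[k + s] a') c := by
        rw [hcdef]
        simp only [cComm]
        rw [br_sub_left, br_sub_right, A, B]
        abel
      rw [hL'] at hQ
      rw [← hcdef] at hQ
      exact half_zero hQ.symm
    apply hZ
    intro l0 x
    rw [L.skew, key, neg_zero]
  · -- triviality implies closure
    intro h k s D H hD hH l
    have hzero : ∀ m a, cComm D H l m a = 0 := h k s D H hD hH l
    constructor
    · constructor
      · constructor
        · intro m a b; rw [hzero, hzero, hzero, add_zero]
        · intro m cc a; rw [hzero, hzero, smul_zero]
        · intro m a; rw [hzero, hzero, smul_zero]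
      · intro m a; rw [hzero, hzero, map_zero]
    · intro l' m a b
      rw [hzero, hzero, br_zero_left, br_zero_right]
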